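/- Suppose (Ω, F, P) is a probability space; A₁, B₁, A₂, B₂ are sub-σ-fields of F such that A₁ ∨ B₁ and A₂ ∨ B₂ are independent; θ := max{τ(A₁, B₁), ψ(A₂, B₂)} < ∞; I and J are positive integers; Cᵢ ∈ A₁ and Dᵢ ∈ A₂ for 1 ≤ i ≤ I, with D₁, ..., D_I a partition of Ω; Eⱼ ∈ B₁ and Fⱼ ∈ B₂ for 1 ≤ j ≤ J, with F₁, ..., F_J a partition of Ω; and A* := ⋃_{i=1}^I (Cᵢ ∩ Dᵢ), B* := ⋃_{j=1}^J (Eⱼ ∩ Fⱼ). Then |P(A* ∩ B*) − P(A*)P(B*)| ≤ θ · [P(A*)·(1 − P(A*))·P(B*)·(1 − P(B*))]^{1/2}. -/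

import Mathlib

open MeasureTheory ProbabilityTheory
open scoped ENNReal

noncomputable def eventCorr {Ω : Type*} {_mΩ : MeasurableSpace Ω} (P : Measure Ω)
    (A B : Set Ω) : ℝ :=
  ((P (A ∩ B)).toReal - (P A).toReal * (P B).toReal) /
    Real.sqrt ((P A).toReal * (1 - (P A).toReal) * (P B).toReal * (1 - (P B).toReal))

noncomputable def tauDep {Ω : Type*} {_mΩ : MeasurableSpace Ω} (P : Measure Ω)
    (𝒜 ℬ : MeasurableSpace Ω) : ℝ :=
  sSup {r : ℝ | ∃ A B : Set Ω, MeasurableSet[𝒜] A ∧ MeasurableSet[ℬ] B ∧ r = |eventCorr P A B|}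

noncomputable def lambdaDep {Ω : Type*} {_mΩ : MeasurableSpace Ω} (P : Measure Ω)
    (𝒜 ℬ : MeasurableSpace Ω) : ℝ :=
  sSup {r : ℝ | ∃ A B : Set Ω, MeasurableSet[𝒜] A ∧ MeasurableSet[ℬ] B ∧
    r = |(P (A ∩ B)).toReal - (P A).toReal * (P B).toReal| /
      Real.sqrt ((P A).toReal * (P B).toReal)}

noncomputable def psiDep {Ω : Type*} {_mΩ : MeasurableSpace Ω} (P : Measure Ω)
    (𝒜 ℬ : MeasurableSpace Ω) : ℝ≥0∞ :=
  ⨆ (A : Set Ω) (_ : MeasurableSet[𝒜] A) (B : Set Ω) (_ : MeasurableSet[ℬ] B),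
    ENNReal.ofReal (|(P (A ∩ B)).toReal - (P A).toReal * (P B).toReal| /
      ((P A).toReal * (P B).toReal))

noncomputable def corrRV {Ω : Type*} {_mΩ : MeasurableSpace Ω} (P : Measure Ω)
    (X Y : Ω → ℝ) : ℝ :=
  (∫ ω, X ω * Y ω ∂P - (∫ ω, X ω ∂P) * (∫ ω, Y ω ∂P)) /
    Real.sqrt ((∫ ω, X ω ^ 2 ∂P - (∫ ω, X ω ∂P) ^ 2) *
      (∫ ω, Y ω ^ 2 ∂P - (∫ ω, Y ω ∂P) ^ 2))

noncomputable def rhoDep {Ω : Type*} {_mΩ : MeasurableSpace Ω} (P : Measure Ω)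
    (𝒜 ℬ : MeasurableSpace Ω) : ℝ :=
  sSup {r : ℝ | ∃ X Y : Ω → ℝ, Measurable[𝒜] X ∧ Measurable[ℬ] Y ∧
    MemLp X 2 P ∧ MemLp Y 2 P ∧ r = |corrRV P X Y|}


section BradleyHelpers
open Finset

lemma min_le_sqrt_mul {u v : ℝ} (hu : 0 ≤ u) (hv : 0 ≤ v) : min u v ≤ Real.sqrt (u * v) := by
  rcases le_total u v with h | h
  · rw [min_eq_left h]
    exact (Real.le_sqrt hu (mul_nonneg hu hv)).2 (by nlinarith)
  · rw [min_eq_right h]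
    exact (Real.le_sqrt hv (mul_nonneg hu hv)).2 (by nlinarith)

lemma cs2 {ι : Type*} (u : Finset ι) (A B C D : ι → ℝ) :
    ∑ x ∈ u, (A x * B x + C x * D x) ≤
      Real.sqrt (∑ x ∈ u, (A x ^ 2 + C x ^ 2)) * Real.sqrt (∑ x ∈ u, (B x ^ 2 + D x ^ 2)) := by
  set F : ι × ℕ → ℝ := fun y => if y.2 = 0 then A y.1 else C y.1 with hF
  set G : ι × ℕ → ℝ := fun y => if y.2 = 0 then B y.1 else D y.1 with hG
  have h1 : ∑ y ∈ u ×ˢ range 2, F y * G y = ∑ x ∈ u, (A x * B x + C x * D x) := by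
    rw [Finset.sum_product]
    refine Finset.sum_congr rfl fun x _ => ?_
    simp [hF, hG, Finset.sum_range_succ]
  have h2 : ∑ y ∈ u ×ˢ range 2, F y ^ 2 = ∑ x ∈ u, (A x ^ 2 + C x ^ 2) := by
    rw [Finset.sum_product]
    refine Finset.sum_congr rfl fun x _ => ?_
    simp [hF, Finset.sum_range_succ]
  have h3 : ∑ y ∈ u ×ˢ range 2, G y ^ 2 = ∑ x ∈ u, (B x ^ 2 + D x ^ 2) := by
    rw [Finset.sum_product]
    refine Finset.sum_congr rfl fun x _ => ?_
    simp [hG, Finset.sum_range_succ]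
  have h4 := Finset.sum_mul_sq_le_sq_mul_sq (u ×ˢ range 2) F G
  calc ∑ x ∈ u, (A x * B x + C x * D x) = ∑ y ∈ u ×ˢ range 2, F y * G y := h1.symm
    _ ≤ |∑ y ∈ u ×ˢ range 2, F y * G y| := le_abs_self _
    _ = Real.sqrt ((∑ y ∈ u ×ˢ range 2, F y * G y) ^ 2) := (Real.sqrt_sq_eq_abs _).symm
    _ ≤ Real.sqrt ((∑ y ∈ u ×ˢ range 2, F y ^ 2) * ∑ y ∈ u ×ˢ range 2, G y ^ 2) :=
        Real.sqrt_le_sqrt h4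
    _ = _ := by
        rw [Real.sqrt_mul (Finset.sum_nonneg fun y _ => sq_nonneg _), h2, h3]


lemma cov_abs_le {Ω : Type*} {mΩ : MeasurableSpace Ω} (P : Measure Ω) [IsProbabilityMeasure P]
    (A B : Set Ω) (hB : MeasurableSet B) :
    |(P (A ∩ B)).toReal - (P A).toReal * (P B).toReal| ≤
      Real.sqrt ((P A).toReal * (1 - (P A).toReal) * (P B).toReal * (1 - (P B).toReal)) := by
  set x := (P (A ∩ B)).toReal with hx
  set a := (P A).toReal with ha
  set b := (P B).toReal with hb
  have hfin : ∀ s : Set Ω, P s ≠ ⊤ := fun s => measure_ne_top P s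
  have hx0 : 0 ≤ x := ENNReal.toReal_nonneg
  have ha0 : 0 ≤ a := ENNReal.toReal_nonneg
  have hb0 : 0 ≤ b := ENNReal.toReal_nonneg
  have hle1 : ∀ s : Set Ω, (P s).toReal ≤ 1 := fun s => by
    rw [show (1:ℝ) = (P Set.univ).toReal by simp]
    exact ENNReal.toReal_mono (hfin _) (measure_mono (Set.subset_univ s))
  have ha1 : a ≤ 1 := hle1 A
  have hb1 : b ≤ 1 := hle1 B
  have hxa : x ≤ a := ENNReal.toReal_mono (hfin _) (measure_mono Set.inter_subset_left)
  have hxb : x ≤ b := ENNReal.toReal_mono (hfin _) (measure_mono Set.inter_subset_right)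
  have hunion : (P (A ∪ B)).toReal + x = a + b := by
    rw [hx, ha, hb, ← ENNReal.toReal_add (hfin _) (hfin _),
      ← ENNReal.toReal_add (hfin _) (hfin _), measure_union_add_inter A hB]
  have hab1 : a + b - 1 ≤ x := by
    have := hle1 (A ∪ B); linarith
  have h1 : x - a * b ≤ Real.sqrt (a * (1 - a) * b * (1 - b)) := by
    calc x - a * b ≤ min (a * (1 - b)) (b * (1 - a)) :=
          le_min (by nlinarith) (by nlinarith)
      _ ≤ Real.sqrt ((a * (1 - b)) * (b * (1 - a))) :=
          min_le_sqrt_mul (by nlinarith) (by nlinarith)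
      _ = _ := by rw [show (a * (1 - b)) * (b * (1 - a)) = a * (1 - a) * b * (1 - b) from by ring]
  have h2 : a * b - x ≤ Real.sqrt (a * (1 - a) * b * (1 - b)) := by
    calc a * b - x ≤ min (a * b) ((1 - a) * (1 - b)) :=
          le_min (by nlinarith) (by nlinarith)
      _ ≤ Real.sqrt ((a * b) * ((1 - a) * (1 - b))) :=
          min_le_sqrt_mul (by nlinarith) (by nlinarith)
      _ = _ := by rw [show (a * b) * ((1 - a) * (1 - b)) = a * (1 - a) * b * (1 - b) from by ring]
  exact abs_sub_le_iff.2 ⟨h1, h2⟩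


end BradleyHelpers

section BradleyAlg
open Finset

lemma bradley_alg (I J : ℕ) (p : ℕ → ℕ → ℝ) (q r c e : ℕ → ℝ) (f : ℕ → ℕ → ℝ) (θ : ℝ)
    (hθ0 : 0 ≤ θ)
    (hq0 : ∀ i ∈ range I, 0 ≤ q i) (hr0 : ∀ j ∈ range J, 0 ≤ r j)
    (hp0 : ∀ i ∈ range I, ∀ j ∈ range J, 0 ≤ p i j)
    (hc0 : ∀ i ∈ range I, 0 ≤ c i) (hc1 : ∀ i ∈ range I, c i ≤ 1)
    (he0 : ∀ j ∈ range J, 0 ≤ e j) (he1 : ∀ j ∈ range J, e j ≤ 1)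
    (hmarg1 : ∀ i ∈ range I, ∑ j ∈ range J, p i j = q i)
    (hmarg2 : ∀ j ∈ range J, ∑ i ∈ range I, p i j = r j)
    (hq1 : ∑ i ∈ range I, q i = 1) (hr1 : ∑ j ∈ range J, r j = 1)
    (hτ : ∀ i ∈ range I, ∀ j ∈ range J,
      |f i j - c i * e j| ≤ θ * Real.sqrt (c i * (1 - c i) * e j * (1 - e j)))
    (hψ : ∀ i ∈ range I, ∀ j ∈ range J, |p i j - q i * r j| ≤ θ * (q i * r j)) :
    |∑ i ∈ range I, ∑ j ∈ range J, f i j * p i j -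
        (∑ i ∈ range I, c i * q i) * (∑ j ∈ range J, e j * r j)| ≤
      θ * Real.sqrt ((∑ i ∈ range I, c i * q i) * (1 - ∑ i ∈ range I, c i * q i) *
        (∑ j ∈ range J, e j * r j) * (1 - ∑ j ∈ range J, e j * r j)) := by
  set pA := ∑ i ∈ range I, c i * q i with hpA
  set pB := ∑ j ∈ range J, e j * r j with hpB
  set u := range I ×ˢ range J with hu
  set w : ℕ × ℕ → ℝ := fun x => p x.1 x.2 - q x.1 * r x.2 with hw
  -- zero-sum lemmas
  have Z3 : ∑ x ∈ u, w x = 0 := by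
    rw [hu, Finset.sum_product]
    rw [show (0:ℝ) = ∑ i ∈ range I, (0:ℝ) by simp]
    refine Finset.sum_congr rfl fun i hi => ?_
    simp only [hw]
    rw [Finset.sum_sub_distrib, hmarg1 i hi, ← Finset.mul_sum, hr1, mul_one, sub_self]
  have Z1 : ∑ x ∈ u, e x.2 * w x = 0 := by
    rw [hu, Finset.sum_product_right]
    rw [show (0:ℝ) = ∑ j ∈ range J, (0:ℝ) by simp]
    refine Finset.sum_congr rfl fun j hj => ?_
    simp only [hw]
    rw [← Finset.mul_sum, Finset.sum_sub_distrib, hmarg2 j hj, ← Finset.sum_mul, hq1, one_mul,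
      sub_self, mul_zero]
  have Z2 : ∑ x ∈ u, c x.1 * w x = 0 := by
    rw [hu, Finset.sum_product]
    rw [show (0:ℝ) = ∑ i ∈ range I, (0:ℝ) by simp]
    refine Finset.sum_congr rfl fun i hi => ?_
    simp only [hw]
    rw [← Finset.mul_sum, Finset.sum_sub_distrib, hmarg1 i hi, ← Finset.mul_sum, hr1, mul_one,
      sub_self, mul_zero]
  -- the centered identity
  have hW : ∑ x ∈ u, (c x.1 - pA) * (e x.2 - pB) * w x = ∑ x ∈ u, c x.1 * e x.2 * w x := by
    have : ∀ x ∈ u, (c x.1 - pA) * (e x.2 - pB) * w x =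
        c x.1 * e x.2 * w x - pA * (e x.2 * w x) - pB * (c x.1 * w x) + pA * pB * w x :=
      fun x _ => by ring
    rw [Finset.sum_congr rfl this, Finset.sum_add_distrib, Finset.sum_sub_distrib,
      Finset.sum_sub_distrib, ← Finset.mul_sum, ← Finset.mul_sum, ← Finset.mul_sum,
      Z1, Z2, Z3]
    ring
  have hCE : ∑ x ∈ u, c x.1 * e x.2 * (q x.1 * r x.2) = pA * pB := by
    rw [hpA, hpB, Finset.sum_mul_sum, hu, Finset.sum_product]
    exact Finset.sum_congr rfl fun i _ => Finset.sum_congr rfl fun j _ => by ring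
  have hDecomp : ∑ i ∈ range I, ∑ j ∈ range J, f i j * p i j - pA * pB =
      ∑ x ∈ u, (p x.1 x.2 * (f x.1 x.2 - c x.1 * e x.2) + (c x.1 - pA) * (e x.2 - pB) * w x) := by
    rw [Finset.sum_add_distrib, hW]
    have : ∀ x ∈ u, c x.1 * e x.2 * w x =
        c x.1 * e x.2 * p x.1 x.2 - c x.1 * e x.2 * (q x.1 * r x.2) := fun x _ => by
      simp only [hw]; ring
    rw [Finset.sum_congr rfl this, Finset.sum_sub_distrib, hCE, ← Finset.sum_product' (range I) (range J) (fun i j => f i j * p i j)]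
    rw [← hu]
    have hsum : ∑ x ∈ u, p x.1 x.2 * (f x.1 x.2 - c x.1 * e x.2) +
        ∑ x ∈ u, c x.1 * e x.2 * p x.1 x.2 = ∑ x ∈ u, f x.1 x.2 * p x.1 x.2 := by
      rw [← Finset.sum_add_distrib]
      exact Finset.sum_congr rfl fun x _ => by ring
    linarith
  -- nonnegativity facts for pA, pB
  have hpA0 : 0 ≤ pA := Finset.sum_nonneg fun i hi => mul_nonneg (hc0 i hi) (hq0 i hi)
  have hpA1 : pA ≤ 1 := by
    rw [hpA, ← hq1]
    exact Finset.sum_le_sum fun i hi => by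
      have := hc1 i hi; have := hq0 i hi; nlinarith
  have hpB0 : 0 ≤ pB := Finset.sum_nonneg fun j hj => mul_nonneg (he0 j hj) (hr0 j hj)
  have hpB1 : pB ≤ 1 := by
    rw [hpB, ← hr1]
    exact Finset.sum_le_sum fun j hj => by
      have := he1 j hj; have := hr0 j hj; nlinarith
  -- the four Cauchy-Schwarz vectors
  set A : ℕ × ℕ → ℝ := fun x => Real.sqrt (p x.1 x.2) * Real.sqrt (c x.1 * (1 - c x.1)) with hA
  set B : ℕ × ℕ → ℝ := fun x => Real.sqrt (p x.1 x.2) * Real.sqrt (e x.2 * (1 - e x.2)) with hB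
  set Cv : ℕ × ℕ → ℝ := fun x => Real.sqrt (q x.1 * r x.2) * |c x.1 - pA| with hCv
  set Dv : ℕ × ℕ → ℝ := fun x => Real.sqrt (q x.1 * r x.2) * |e x.2 - pB| with hDv
  -- termwise bound
  have hterm : ∀ x ∈ u, |p x.1 x.2 * (f x.1 x.2 - c x.1 * e x.2) + (c x.1 - pA) * (e x.2 - pB) * w x|
      ≤ θ * (A x * B x + Cv x * Dv x) := by
    intro x hx
    rw [hu, Finset.mem_product] at hx
    obtain ⟨hx1, hx2⟩ := hx
    have hp := hp0 x.1 hx1 x.2 hx2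
    have hk0 : 0 ≤ c x.1 * (1 - c x.1) :=
      mul_nonneg (hc0 x.1 hx1) (by have := hc1 x.1 hx1; linarith)
    have hm0 : 0 ≤ e x.2 * (1 - e x.2) :=
      mul_nonneg (he0 x.2 hx2) (by have := he1 x.2 hx2; linarith)
    have hqr0 : 0 ≤ q x.1 * r x.2 := mul_nonneg (hq0 x.1 hx1) (hr0 x.2 hx2)
    have hsq : Real.sqrt (c x.1 * (1 - c x.1) * e x.2 * (1 - e x.2)) =
        Real.sqrt (c x.1 * (1 - c x.1)) * Real.sqrt (e x.2 * (1 - e x.2)) := by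
      rw [show c x.1 * (1 - c x.1) * e x.2 * (1 - e x.2) =
        (c x.1 * (1 - c x.1)) * (e x.2 * (1 - e x.2)) by ring, Real.sqrt_mul hk0]
    have hτx := hτ x.1 hx1 x.2 hx2
    rw [hsq] at hτx
    have hψx := hψ x.1 hx1 x.2 hx2
    have hp2 : Real.sqrt (p x.1 x.2) * Real.sqrt (p x.1 x.2) = p x.1 x.2 :=
      Real.mul_self_sqrt hp
    have hq2 : Real.sqrt (q x.1 * r x.2) * Real.sqrt (q x.1 * r x.2) = q x.1 * r x.2 :=
      Real.mul_self_sqrt hqr0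
    calc |p x.1 x.2 * (f x.1 x.2 - c x.1 * e x.2) + (c x.1 - pA) * (e x.2 - pB) * w x|
        ≤ |p x.1 x.2 * (f x.1 x.2 - c x.1 * e x.2)| + |(c x.1 - pA) * (e x.2 - pB) * w x| :=
          abs_add_le _ _
      _ = p x.1 x.2 * |f x.1 x.2 - c x.1 * e x.2| + |c x.1 - pA| * |e x.2 - pB| * |w x| := by
          rw [abs_mul, abs_of_nonneg hp, abs_mul, abs_mul]
      _ ≤ p x.1 x.2 * (θ * (Real.sqrt (c x.1 * (1 - c x.1)) * Real.sqrt (e x.2 * (1 - e x.2))))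
          + |c x.1 - pA| * |e x.2 - pB| * (θ * (q x.1 * r x.2)) := by
          refine add_le_add (mul_le_mul_of_nonneg_left hτx hp) ?_
          exact mul_le_mul_of_nonneg_left hψx (mul_nonneg (abs_nonneg _) (abs_nonneg _))
      _ = θ * (A x * B x + Cv x * Dv x) := by
          have hAB : A x * B x = p x.1 x.2 *
              (Real.sqrt (c x.1 * (1 - c x.1)) * Real.sqrt (e x.2 * (1 - e x.2))) := by
            simp only [hA, hB]
            rw [show Real.sqrt (p x.1 x.2) * Real.sqrt (c x.1 * (1 - c x.1)) *
                (Real.sqrt (p x.1 x.2) * Real.sqrt (e x.2 * (1 - e x.2))) =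
                (Real.sqrt (p x.1 x.2) * Real.sqrt (p x.1 x.2)) *
                (Real.sqrt (c x.1 * (1 - c x.1)) * Real.sqrt (e x.2 * (1 - e x.2))) from by ring,
              hp2]
          have hCD : Cv x * Dv x = (q x.1 * r x.2) * (|c x.1 - pA| * |e x.2 - pB|) := by
            simp only [hCv, hDv]
            rw [show Real.sqrt (q x.1 * r x.2) * |c x.1 - pA| *
                (Real.sqrt (q x.1 * r x.2) * |e x.2 - pB|) =
                (Real.sqrt (q x.1 * r x.2) * Real.sqrt (q x.1 * r x.2)) *
                (|c x.1 - pA| * |e x.2 - pB|) from by ring, hq2]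
          rw [hAB, hCD]; ring
  -- the variance sums
  have hSA : ∑ x ∈ u, (A x ^ 2 + Cv x ^ 2) = pA * (1 - pA) := by
    have step1 : ∀ x ∈ u, A x ^ 2 + Cv x ^ 2 =
        p x.1 x.2 * (c x.1 * (1 - c x.1)) + q x.1 * r x.2 * (c x.1 - pA) ^ 2 := by
      intro x hx
      rw [hu, Finset.mem_product] at hx
      obtain ⟨hx1, hx2⟩ := hx
      have hk0 : 0 ≤ c x.1 * (1 - c x.1) :=
        mul_nonneg (hc0 x.1 hx1) (by have := hc1 x.1 hx1; linarith)
      simp only [hA, hCv, mul_pow, sq_abs]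
      rw [Real.sq_sqrt (hp0 x.1 hx1 x.2 hx2), Real.sq_sqrt hk0,
        Real.sq_sqrt (mul_nonneg (hq0 x.1 hx1) (hr0 x.2 hx2))]
    rw [Finset.sum_congr rfl step1, hu, Finset.sum_product]
    have step2 : ∀ i ∈ range I, ∑ j ∈ range J,
        (p i j * (c i * (1 - c i)) + q i * r j * (c i - pA) ^ 2) =
        (1 - 2 * pA) * (c i * q i) + pA ^ 2 * q i := by
      intro i hi
      rw [Finset.sum_add_distrib, ← Finset.sum_mul, hmarg1 i hi]
      rw [Finset.sum_congr rfl fun j (_ : j ∈ range J) =>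
        show q i * r j * (c i - pA) ^ 2 = (q i * (c i - pA) ^ 2) * r j from by ring]
      rw [← Finset.mul_sum, hr1, mul_one]
      ring
    rw [Finset.sum_congr rfl step2, Finset.sum_add_distrib, ← Finset.mul_sum, ← Finset.mul_sum,
      ← hpA, hq1, mul_one]
    ring
  have hSB : ∑ x ∈ u, (B x ^ 2 + Dv x ^ 2) = pB * (1 - pB) := by
    have step1 : ∀ x ∈ u, B x ^ 2 + Dv x ^ 2 =
        p x.1 x.2 * (e x.2 * (1 - e x.2)) + q x.1 * r x.2 * (e x.2 - pB) ^ 2 := by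
      intro x hx
      rw [hu, Finset.mem_product] at hx
      obtain ⟨hx1, hx2⟩ := hx
      have hm0 : 0 ≤ e x.2 * (1 - e x.2) :=
        mul_nonneg (he0 x.2 hx2) (by have := he1 x.2 hx2; linarith)
      simp only [hB, hDv, mul_pow, sq_abs]
      rw [Real.sq_sqrt (hp0 x.1 hx1 x.2 hx2), Real.sq_sqrt hm0,
        Real.sq_sqrt (mul_nonneg (hq0 x.1 hx1) (hr0 x.2 hx2))]
    rw [Finset.sum_congr rfl step1, hu, Finset.sum_product_right]
    have step2 : ∀ j ∈ range J, ∑ i ∈ range I,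
        (p i j * (e j * (1 - e j)) + q i * r j * (e j - pB) ^ 2) =
        (1 - 2 * pB) * (e j * r j) + pB ^ 2 * r j := by
      intro j hj
      rw [Finset.sum_add_distrib, ← Finset.sum_mul, hmarg2 j hj]
      rw [Finset.sum_congr rfl fun i (_ : i ∈ range I) =>
        show q i * r j * (e j - pB) ^ 2 = (r j * (e j - pB) ^ 2) * q i from by ring]
      rw [← Finset.mul_sum, hq1, mul_one]
      ring
    rw [Finset.sum_congr rfl step2, Finset.sum_add_distrib, ← Finset.mul_sum, ← Finset.mul_sum,
      ← hpB, hr1, mul_one]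
    ring
  -- put everything together
  calc |∑ i ∈ range I, ∑ j ∈ range J, f i j * p i j - pA * pB|
      = |∑ x ∈ u, (p x.1 x.2 * (f x.1 x.2 - c x.1 * e x.2) + (c x.1 - pA) * (e x.2 - pB) * w x)| := by
        rw [hDecomp]
    _ ≤ ∑ x ∈ u, |p x.1 x.2 * (f x.1 x.2 - c x.1 * e x.2) + (c x.1 - pA) * (e x.2 - pB) * w x| :=
        Finset.abs_sum_le_sum_abs _ _
    _ ≤ ∑ x ∈ u, θ * (A x * B x + Cv x * Dv x) := Finset.sum_le_sum hterm
    _ = θ * ∑ x ∈ u, (A x * B x + Cv x * Dv x) := by rw [Finset.mul_sum]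
    _ ≤ θ * (Real.sqrt (∑ x ∈ u, (A x ^ 2 + Cv x ^ 2)) *
          Real.sqrt (∑ x ∈ u, (B x ^ 2 + Dv x ^ 2))) :=
        mul_le_mul_of_nonneg_left (cs2 u A B Cv Dv) hθ0
    _ = θ * Real.sqrt (pA * (1 - pA) * pB * (1 - pB)) := by
        rw [hSA, hSB, ← Real.sqrt_mul (mul_nonneg hpA0 (by linarith))]
        rw [show pA * (1 - pA) * (pB * (1 - pB)) = pA * (1 - pA) * pB * (1 - pB) from by ring]

end BradleyAlg

section BradleyMeasure
open Finset

lemma tauDep_bddAbove {Ω : Type*} {mΩ : MeasurableSpace Ω} (P : Measure Ω)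
    [IsProbabilityMeasure P] (𝒜 ℬ : MeasurableSpace Ω) (hℬ : ℬ ≤ mΩ) :
    BddAbove {r : ℝ | ∃ A B : Set Ω, MeasurableSet[𝒜] A ∧ MeasurableSet[ℬ] B ∧
      r = |eventCorr P A B|} := by
  refine ⟨1, fun r hr => ?_⟩
  obtain ⟨A, B, hA, hB, rfl⟩ := hr
  have hco := cov_abs_le P A B (hℬ B hB)
  rw [eventCorr, abs_div, abs_of_nonneg (Real.sqrt_nonneg _)]
  exact div_le_one_of_le₀ hco (Real.sqrt_nonneg _)

lemma tauDep_nonneg {Ω : Type*} {mΩ : MeasurableSpace Ω} (P : Measure Ω)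
    [IsProbabilityMeasure P] (𝒜 ℬ : MeasurableSpace Ω) (hℬ : ℬ ≤ mΩ) :
    0 ≤ tauDep P 𝒜 ℬ := by
  refine le_csSup (tauDep_bddAbove P 𝒜 ℬ hℬ) ⟨∅, ∅, @MeasurableSet.empty _ 𝒜, @MeasurableSet.empty _ ℬ, ?_⟩
  simp [eventCorr]

lemma abs_cov_le_tau {Ω : Type*} {mΩ : MeasurableSpace Ω} (P : Measure Ω)
    [IsProbabilityMeasure P] (𝒜 ℬ : MeasurableSpace Ω) (hℬ : ℬ ≤ mΩ)
    {A B : Set Ω} (hA : MeasurableSet[𝒜] A) (hB : MeasurableSet[ℬ] B) :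
    |(P (A ∩ B)).toReal - (P A).toReal * (P B).toReal| ≤
      tauDep P 𝒜 ℬ *
        Real.sqrt ((P A).toReal * (1 - (P A).toReal) * (P B).toReal * (1 - (P B).toReal)) := by
  have hmem : |eventCorr P A B| ≤ tauDep P 𝒜 ℬ :=
    le_csSup (tauDep_bddAbove P 𝒜 ℬ hℬ) ⟨A, B, hA, hB, rfl⟩
  have hco := cov_abs_le P A B (hℬ B hB)
  rcases eq_or_lt_of_le (Real.sqrt_nonneg ((P A).toReal * (1 - (P A).toReal) *
      (P B).toReal * (1 - (P B).toReal))) with h0 | h0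
  · rw [← h0, mul_zero]
    rw [← h0] at hco
    linarith [abs_nonneg ((P (A ∩ B)).toReal - (P A).toReal * (P B).toReal)]
  · simp only [eventCorr] at hmem
    rw [abs_div, abs_of_nonneg h0.le, div_le_iff₀ h0] at hmem
    linarith

lemma abs_le_psi {Ω : Type*} {mΩ : MeasurableSpace Ω} (P : Measure Ω)
    [IsProbabilityMeasure P] (𝒜 ℬ : MeasurableSpace Ω)
    (hψ : psiDep P 𝒜 ℬ ≠ ⊤)
    {A B : Set Ω} (hA : MeasurableSet[𝒜] A) (hB : MeasurableSet[ℬ] B) :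
    |(P (A ∩ B)).toReal - (P A).toReal * (P B).toReal| ≤
      (psiDep P 𝒜 ℬ).toReal * ((P A).toReal * (P B).toReal) := by
  set a := (P A).toReal with ha
  set b := (P B).toReal with hb
  set x := (P (A ∩ B)).toReal with hx
  have hfin : ∀ s : Set Ω, P s ≠ ⊤ := fun s => measure_ne_top P s
  have hxa : x ≤ a := ENNReal.toReal_mono (hfin _) (measure_mono Set.inter_subset_left)
  have hxb : x ≤ b := ENNReal.toReal_mono (hfin _) (measure_mono Set.inter_subset_right)
  have hx0 : 0 ≤ x := ENNReal.toReal_nonneg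
  have ha0 : 0 ≤ a := ENNReal.toReal_nonneg
  have hb0 : 0 ≤ b := ENNReal.toReal_nonneg
  rcases eq_or_lt_of_le (mul_nonneg ha0 hb0) with h0 | h0
  · have hx0' : x = 0 := by
      rcases mul_eq_zero.1 h0.symm with h | h
      · rw [h] at hxa; linarith
      · rw [h] at hxb; linarith
    rw [← h0, hx0']
    simp
  · have hsup : ENNReal.ofReal (|x - a * b| / (a * b)) ≤ psiDep P 𝒜 ℬ := by
      refine le_trans ?_ (le_iSup _ A)
      refine le_trans ?_ (le_iSup _ hA)
      refine le_trans ?_ (le_iSup _ B)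
      exact le_iSup (fun _ : MeasurableSet[ℬ] B => ENNReal.ofReal (|x - a * b| / (a * b))) hB
    have := (ENNReal.ofReal_le_iff_le_toReal hψ).1 hsup
    calc |x - a * b| = (|x - a * b| / (a * b)) * (a * b) := (div_mul_cancel₀ _ h0.ne').symm
      _ ≤ (psiDep P 𝒜 ℬ).toReal * (a * b) := mul_le_mul_of_nonneg_right this (le_of_lt h0)

end BradleyMeasure

/-- Eq. (2.7): the key inequality in the proof of Theorem 4. -/
theorem stmt19 {Ω : Type*} {mΩ : MeasurableSpace Ω} (P : Measure Ω) [IsProbabilityMeasure P]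
    (𝒜₁ ℬ₁ 𝒜₂ ℬ₂ : MeasurableSpace Ω)
    (h𝒜₁ : 𝒜₁ ≤ mΩ) (hℬ₁ : ℬ₁ ≤ mΩ) (h𝒜₂ : 𝒜₂ ≤ mΩ) (hℬ₂ : ℬ₂ ≤ mΩ)
    (hIndep : Indep (𝒜₁ ⊔ ℬ₁) (𝒜₂ ⊔ ℬ₂) P)
    (hψ : psiDep P 𝒜₂ ℬ₂ ≠ ⊤)
    (θ : ℝ) (hθ : θ = max (tauDep P 𝒜₁ ℬ₁) (psiDep P 𝒜₂ ℬ₂).toReal)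
    (I J : ℕ) (hI : 0 < I) (hJ : 0 < J)
    (C D E F : ℕ → Set Ω)
    (hC : ∀ i < I, MeasurableSet[𝒜₁] (C i)) (hD : ∀ i < I, MeasurableSet[𝒜₂] (D i))
    (hE : ∀ j < J, MeasurableSet[ℬ₁] (E j)) (hF : ∀ j < J, MeasurableSet[ℬ₂] (F j))
    (hDdisj : ∀ i < I, ∀ j < I, i ≠ j → Disjoint (D i) (D j))
    (hDcover : (⋃ i ∈ Finset.range I, D i) = Set.univ)
    (hFdisj : ∀ i < J, ∀ j < J, i ≠ j → Disjoint (F i) (F j))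
    (hFcover : (⋃ j ∈ Finset.range J, F j) = Set.univ)
    (Astar Bstar : Set Ω)
    (hAstar : Astar = ⋃ i ∈ Finset.range I, C i ∩ D i)
    (hBstar : Bstar = ⋃ j ∈ Finset.range J, E j ∩ F j) :
    |(P (Astar ∩ Bstar)).toReal - (P Astar).toReal * (P Bstar).toReal| ≤
      θ * Real.sqrt ((P Astar).toReal * (1 - (P Astar).toReal) *
        (P Bstar).toReal * (1 - (P Bstar).toReal)) := by
  -- θ facts
  have hθτ : tauDep P 𝒜₁ ℬ₁ ≤ θ := hθ ▸ le_max_left _ _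
  have hθψ : (psiDep P 𝒜₂ ℬ₂).toReal ≤ θ := hθ ▸ le_max_right _ _
  have hθ0 : 0 ≤ θ := le_trans (tauDep_nonneg P 𝒜₁ ℬ₁ hℬ₁) hθτ
  have hind : ∀ s t : Set Ω, MeasurableSet[𝒜₁ ⊔ ℬ₁] s → MeasurableSet[𝒜₂ ⊔ ℬ₂] t →
      P (s ∩ t) = P s * P t := (Indep_iff _ _ _).1 hIndep
  have hfin : ∀ s : Set Ω, P s ≠ ⊤ := fun s => measure_ne_top P s
  set c : ℕ → ℝ := fun i => (P (C i)).toReal with hc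
  set e : ℕ → ℝ := fun j => (P (E j)).toReal with he
  set q : ℕ → ℝ := fun i => (P (D i)).toReal with hq
  set r : ℕ → ℝ := fun j => (P (F j)).toReal with hr
  set p : ℕ → ℕ → ℝ := fun i j => (P (D i ∩ F j)).toReal with hp
  set f : ℕ → ℕ → ℝ := fun i j => (P (C i ∩ E j)).toReal with hf
  have hle1 : ∀ s : Set Ω, (P s).toReal ≤ 1 := fun s => by
    rw [show (1:ℝ) = (P Set.univ).toReal by simp]
    exact ENNReal.toReal_mono (hfin _) (measure_mono (Set.subset_univ s))
  -- μ(Astar) = ∑ c i * q i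
  have hMA : (P Astar).toReal = ∑ i ∈ Finset.range I, c i * q i := by
    rw [hAstar, measure_biUnion_finset ?_ ?_]
    · rw [ENNReal.toReal_sum fun i _ => hfin _]
      refine Finset.sum_congr rfl fun i hi => ?_
      rw [Finset.mem_range] at hi
      rw [hind (C i) (D i) ((le_sup_left : 𝒜₁ ≤ 𝒜₁ ⊔ ℬ₁) _ (hC i hi))
        ((le_sup_left : 𝒜₂ ≤ 𝒜₂ ⊔ ℬ₂) _ (hD i hi)), ENNReal.toReal_mul]
    · intro a ha b hb hab
      rw [Finset.mem_coe, Finset.mem_range] at ha hb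
      exact (hDdisj a ha b hb hab).mono Set.inter_subset_right Set.inter_subset_right
    · intro i hi
      rw [Finset.mem_range] at hi
      exact (h𝒜₁ _ (hC i hi)).inter (h𝒜₂ _ (hD i hi))
  have hMB : (P Bstar).toReal = ∑ j ∈ Finset.range J, e j * r j := by
    rw [hBstar, measure_biUnion_finset ?_ ?_]
    · rw [ENNReal.toReal_sum fun j _ => hfin _]
      refine Finset.sum_congr rfl fun j hj => ?_
      rw [Finset.mem_range] at hj
      rw [hind (E j) (F j) ((le_sup_right : ℬ₁ ≤ 𝒜₁ ⊔ ℬ₁) _ (hE j hj))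
        ((le_sup_right : ℬ₂ ≤ 𝒜₂ ⊔ ℬ₂) _ (hF j hj)), ENNReal.toReal_mul]
    · intro a ha b hb hab
      rw [Finset.mem_coe, Finset.mem_range] at ha hb
      exact (hFdisj a ha b hb hab).mono Set.inter_subset_right Set.inter_subset_right
    · intro j hj
      rw [Finset.mem_range] at hj
      exact (hℬ₁ _ (hE j hj)).inter (hℬ₂ _ (hF j hj))
  -- μ(Astar ∩ Bstar) = ∑∑ f i j * p i j
  have hset : Astar ∩ Bstar = ⋃ x ∈ Finset.range I ×ˢ Finset.range J,
      ((C x.1 ∩ E x.2) ∩ (D x.1 ∩ F x.2)) := by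
    rw [hAstar, hBstar]
    ext ω
    simp only [Set.mem_inter_iff, Set.mem_iUnion, Finset.mem_product, Finset.mem_range,
      exists_prop, Prod.exists]
    constructor
    · rintro ⟨⟨i, hi, hCi, hDi⟩, ⟨j, hj, hEj, hFj⟩⟩
      exact ⟨i, j, ⟨hi, hj⟩, ⟨hCi, hEj⟩, hDi, hFj⟩
    · rintro ⟨i, j, ⟨hi, hj⟩, ⟨hCi, hEj⟩, hDi, hFj⟩
      exact ⟨⟨i, hi, hCi, hDi⟩, ⟨j, hj, hEj, hFj⟩⟩
  have hMAB : (P (Astar ∩ Bstar)).toReal =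
      ∑ i ∈ Finset.range I, ∑ j ∈ Finset.range J, f i j * p i j := by
    rw [hset, measure_biUnion_finset ?_ ?_]
    · rw [ENNReal.toReal_sum fun x _ => hfin _, Finset.sum_product]
      refine Finset.sum_congr rfl fun i hi => Finset.sum_congr rfl fun j hj => ?_
      rw [Finset.mem_range] at hi hj
      rw [hind (C i ∩ E j) (D i ∩ F j)
        (((le_sup_left : 𝒜₁ ≤ 𝒜₁ ⊔ ℬ₁) _ (hC i hi)).inter
          ((le_sup_right : ℬ₁ ≤ 𝒜₁ ⊔ ℬ₁) _ (hE j hj)))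
        (((le_sup_left : 𝒜₂ ≤ 𝒜₂ ⊔ ℬ₂) _ (hD i hi)).inter
          ((le_sup_right : ℬ₂ ≤ 𝒜₂ ⊔ ℬ₂) _ (hF j hj))), ENNReal.toReal_mul]
    · intro a ha b hb hab
      rw [Finset.mem_coe, Finset.mem_product, Finset.mem_range, Finset.mem_range] at ha hb
      have : a.1 ≠ b.1 ∨ a.2 ≠ b.2 := by
        by_contra h
        push_neg at h
        exact hab (Prod.ext h.1 h.2)
      rcases this with h | h
      · exact (hDdisj a.1 ha.1 b.1 hb.1 h).mono
          (Set.inter_subset_right.trans Set.inter_subset_left)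
          (Set.inter_subset_right.trans Set.inter_subset_left)
      · exact (hFdisj a.2 ha.2 b.2 hb.2 h).mono
          (Set.inter_subset_right.trans Set.inter_subset_right)
          (Set.inter_subset_right.trans Set.inter_subset_right)
    · intro x hx
      rw [Finset.mem_product, Finset.mem_range, Finset.mem_range] at hx
      exact ((h𝒜₁ _ (hC x.1 hx.1)).inter (hℬ₁ _ (hE x.2 hx.2))).inter
        ((h𝒜₂ _ (hD x.1 hx.1)).inter (hℬ₂ _ (hF x.2 hx.2)))
  -- marginals
  have hmarg1 : ∀ i ∈ Finset.range I, ∑ j ∈ Finset.range J, p i j = q i := by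
    intro i hi
    rw [Finset.mem_range] at hi
    have hDi : D i = ⋃ j ∈ Finset.range J, (D i ∩ F j) := by
      rw [← Set.inter_iUnion₂, hFcover, Set.inter_univ]
    have hPD : P (D i) = ∑ j ∈ Finset.range J, P (D i ∩ F j) := by
      conv_lhs => rw [hDi]
      refine measure_biUnion_finset ?_ ?_
      · intro a ha b hb hab
        rw [Finset.mem_coe, Finset.mem_range] at ha hb
        exact (hFdisj a ha b hb hab).mono Set.inter_subset_right Set.inter_subset_right
      · intro j hj
        rw [Finset.mem_range] at hj
        exact (h𝒜₂ _ (hD i hi)).inter (hℬ₂ _ (hF j hj))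
    show ∑ j ∈ Finset.range J, (P (D i ∩ F j)).toReal = (P (D i)).toReal
    rw [hPD, ENNReal.toReal_sum fun j _ => hfin _]
  have hmarg2 : ∀ j ∈ Finset.range J, ∑ i ∈ Finset.range I, p i j = r j := by
    intro j hj
    rw [Finset.mem_range] at hj
    have hFj : F j = ⋃ i ∈ Finset.range I, (D i ∩ F j) := by
      conv_lhs => rw [← Set.univ_inter (F j), ← hDcover]
      rw [Set.iUnion₂_inter]
    have hPF : P (F j) = ∑ i ∈ Finset.range I, P (D i ∩ F j) := by
      conv_lhs => rw [hFj]
      refine measure_biUnion_finset ?_ ?_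
      · intro a ha b hb hab
        rw [Finset.mem_coe, Finset.mem_range] at ha hb
        exact (hDdisj a ha b hb hab).mono Set.inter_subset_left Set.inter_subset_left
      · intro i hi
        rw [Finset.mem_range] at hi
        exact (h𝒜₂ _ (hD i hi)).inter (hℬ₂ _ (hF j hj))
    show ∑ i ∈ Finset.range I, (P (D i ∩ F j)).toReal = (P (F j)).toReal
    rw [hPF, ENNReal.toReal_sum fun i _ => hfin _]
  have hq1 : ∑ i ∈ Finset.range I, q i = 1 := by
    show ∑ i ∈ Finset.range I, (P (D i)).toReal = 1
    rw [← ENNReal.toReal_sum fun i _ => hfin _, ← measure_biUnion_finset ?_ ?_]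
    · rw [hDcover]; simp
    · intro a ha b hb hab
      rw [Finset.mem_coe, Finset.mem_range] at ha hb
      exact hDdisj a ha b hb hab
    · intro i hi
      rw [Finset.mem_range] at hi
      exact h𝒜₂ _ (hD i hi)
  have hr1 : ∑ j ∈ Finset.range J, r j = 1 := by
    show ∑ j ∈ Finset.range J, (P (F j)).toReal = 1
    rw [← ENNReal.toReal_sum fun j _ => hfin _, ← measure_biUnion_finset ?_ ?_]
    · rw [hFcover]; simp
    · intro a ha b hb hab
      rw [Finset.mem_coe, Finset.mem_range] at ha hb
      exact hFdisj a ha b hb hab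
    · intro j hj
      rw [Finset.mem_range] at hj
      exact hℬ₂ _ (hF j hj)
  -- mixing bounds
  have hτb : ∀ i ∈ Finset.range I, ∀ j ∈ Finset.range J,
      |f i j - c i * e j| ≤ θ * Real.sqrt (c i * (1 - c i) * e j * (1 - e j)) := by
    intro i hi j hj
    rw [Finset.mem_range] at hi hj
    refine le_trans (abs_cov_le_tau P 𝒜₁ ℬ₁ hℬ₁ (hC i hi) (hE j hj)) ?_
    exact mul_le_mul_of_nonneg_right hθτ (Real.sqrt_nonneg _)
  have hψb : ∀ i ∈ Finset.range I, ∀ j ∈ Finset.range J,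
      |p i j - q i * r j| ≤ θ * (q i * r j) := by
    intro i hi j hj
    rw [Finset.mem_range] at hi hj
    refine le_trans (abs_le_psi P 𝒜₂ ℬ₂ hψ (hD i hi) (hF j hj)) ?_
    exact mul_le_mul_of_nonneg_right hθψ (mul_nonneg ENNReal.toReal_nonneg ENNReal.toReal_nonneg)
  have hmain := bradley_alg I J p q r c e f θ hθ0
    (fun i _ => ENNReal.toReal_nonneg) (fun j _ => ENNReal.toReal_nonneg)
    (fun i _ j _ => ENNReal.toReal_nonneg)
    (fun i _ => ENNReal.toReal_nonneg) (fun i _ => hle1 _)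
    (fun j _ => ENNReal.toReal_nonneg) (fun j _ => hle1 _)
    hmarg1 hmarg2 hq1 hr1 hτb hψb
  rw [hMA, hMB, hMAB]
  exact hmain
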